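/- Let r ≥ 1 and suppose (a_1,...,a_r) ∈ 𝒜_r* with a_1 ≤ a_2 ≤ ⋯ ≤ a_r. If a_k = a_{k+1} for some k ∈ {1,...,r-1}, then Σ_{j=1}^k a_j > k(k+1)/2 (strict inequality). -/

import Mathlib

/-- `𝒜_r*` : the set of a ∈ ℝ^r with Σ a_j = r(r+1)/2 and Σ_{j∈E} a_j ≥ |E|(|E|+1)/2
for every subset E of the index set. -/
def Astar (r : ℕ) : Set (Fin r → ℝ) :=
  {a : Fin r → ℝ |
    (∑ j, a j) = (r : ℝ) * ((r : ℝ) + 1) / 2 ∧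
    ∀ E : Finset (Fin r), (E.card : ℝ) * ((E.card : ℝ) + 1) / 2 ≤ ∑ j ∈ E, a j}

lemma filt_insert (r m : ℕ) (hm : m < r) :
    Finset.univ.filter (fun j : Fin r => (j:ℕ) < m + 1)
      = insert ⟨m, hm⟩ (Finset.univ.filter (fun j : Fin r => (j:ℕ) < m)) := by
  ext x
  simp only [Finset.mem_filter, Finset.mem_univ, true_and, Finset.mem_insert, Fin.ext_iff]
  omega

lemma filt_card (r : ℕ) : ∀ m : ℕ, m ≤ r →
    (Finset.univ.filter (fun j : Fin r => (j:ℕ) < m)).card = m := by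
  intro m
  induction m with
  | zero => intro _; simp
  | succ n ih =>
    intro h
    rw [filt_insert r n (by omega), Finset.card_insert_of_notMem (by simp), ih (by omega)]

/-- if (a_1,...,a_r) ∈ 𝒜_r* with a_1 ≤ ⋯ ≤ a_r and a_k = a_{k+1} for some
k ∈ {1,...,r-1}, then Σ_{j=1}^k a_j > k(k+1)/2.  (Indices here are 1-based in the
informal statement; `a ⟨k-1,_⟩` is the k-th coordinate.) -/
theorem stmt_9 (r : ℕ) (hr : 1 ≤ r) (a : Fin r → ℝ)
    (ha : a ∈ Astar r) (hmono : Monotone a)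
    (k : ℕ) (hk1 : 1 ≤ k) (hk2 : k < r)
    (heq : a ⟨k - 1, by omega⟩ = a ⟨k, hk2⟩) :
    (k : ℝ) * ((k : ℝ) + 1) / 2 < ∑ j ∈ Finset.univ.filter (fun j : Fin r => (j : ℕ) < k), a j := by
  obtain ⟨hsum, hE⟩ := ha
  obtain ⟨m, rfl⟩ : ∃ m, k = m + 1 := ⟨k - 1, by omega⟩
  have hm1 : m < r := by omega
  have heq' : a ⟨m, hm1⟩ = a ⟨m + 1, hk2⟩ := by
    convert heq using 2
    simp
  have h1 := hE (Finset.univ.filter (fun j : Fin r => (j:ℕ) < m))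
  have h2 := hE (Finset.univ.filter (fun j : Fin r => (j:ℕ) < m + 2))
  rw [filt_card r m (by omega)] at h1
  rw [filt_card r (m + 2) (by omega)] at h2
  have e1 : ∑ j ∈ Finset.univ.filter (fun j : Fin r => (j:ℕ) < m + 1), a j
      = a ⟨m, hm1⟩ + ∑ j ∈ Finset.univ.filter (fun j : Fin r => (j:ℕ) < m), a j := by
    rw [filt_insert r m hm1, Finset.sum_insert (by simp)]
  have e2 : ∑ j ∈ Finset.univ.filter (fun j : Fin r => (j:ℕ) < m + 2), a j
      = a ⟨m + 1, hk2⟩ + ∑ j ∈ Finset.univ.filter (fun j : Fin r => (j:ℕ) < m + 1), a j := by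
    rw [filt_insert r (m + 1) hk2, Finset.sum_insert (by simp)]
  push_cast at h1 h2 ⊢
  nlinarith [h1, h2, e1, e2, heq']
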